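/- Let A be a finite hypergroup and let d: ℝA → ℝ be the linear extension of assigning to each basis element x its Perron–Frobenius eigenvalue d_x of the left-multiplication operator ℓ_x on ℝA. Then d is a ring homomorphism: d_{xy} = d_x d_y, i.e., d_x d_y = Σ_z N_{xy}^z d_z for all basis elements x, y. -/
import Mathlib


/-- A finite hypergroup: a finite basis set with involution `inv`, identity `e`,
and nonnegative real structure constants `N x y z` (the coefficient of `z` in
the product `x·y`) making ℝA an associative unital algebra, with the involution
an anti-automorphism, and with `N x y e ≠ 0` iff `y = inv x`. -/
structure Hypergroup (A : Type) [Fintype A] [DecidableEq A] where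
  N : A → A → A → ℝ
  e : A
  inv : A → A
  N_nonneg : ∀ x y z, 0 ≤ N x y z
  inv_inv : ∀ x, inv (inv x) = x
  one_mul : ∀ x z, N e x z = if z = x then 1 else 0
  mul_one : ∀ x z, N x e z = if z = x then 1 else 0
  assoc : ∀ x y z w, ∑ u, N x y u * N u z w = ∑ u, N y z u * N x u w
  inv_anti : ∀ x y z, N (inv y) (inv x) (inv z) = N x y z
  dual : ∀ x y, N x y e ≠ 0 ↔ y = inv x

namespace Hypergroup

variable {A : Type} [Fintype A] [DecidableEq A]

/-- The coefficient of a basis element `z` in the product `x₁ ⋯ xₙ` of a list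
of basis elements (the empty product being the identity `e`). -/
def coeff (H : Hypergroup A) : List A → A → ℝ
  | [], z => if z = H.e then 1 else 0
  | x :: l, z => ∑ y, H.coeff l y * H.N x y z

end Hypergroup

namespace HGaux

open Finset

set_option linter.unusedSectionVars false

variable {A : Type} [Fintype A] [DecidableEq A]

noncomputable def c (H : Hypergroup A) (x : A) : ℝ := H.N x (H.inv x) H.e

lemma c_pos (H : Hypergroup A) (x : A) : 0 < c H x :=
  lt_of_le_of_ne (H.N_nonneg _ _ _) (Ne.symm ((H.dual x (H.inv x)).2 rfl))

lemma N_e (H : Hypergroup A) (a b : A) :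
    H.N a b H.e = if b = H.inv a then c H a else 0 := by
  by_cases h : b = H.inv a
  · subst h; simp [c]
  · simp only [h, if_false]
    by_contra hne
    exact h ((H.dual a b).1 hne)

lemma N_e' (H : Hypergroup A) (a b : A) :
    H.N a b H.e = if a = H.inv b then c H a else 0 := by
  rw [N_e]
  congr 1
  simp only [eq_iff_iff]
  constructor
  · intro h; rw [h, H.inv_inv]
  · intro h; rw [h, H.inv_inv]

lemma key1 (H : Hypergroup A) (x y z : A) :
    H.N x y (H.inv z) * c H (H.inv z) = H.N y z (H.inv x) * c H x := by
  have h := H.assoc x y z H.e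
  have hl : ∑ u, H.N x y u * H.N u z H.e = H.N x y (H.inv z) * c H (H.inv z) := by
    have : ∀ u, H.N x y u * H.N u z H.e
        = if u = H.inv z then H.N x y u * c H u else 0 := by
      intro u
      rw [N_e' H u z]
      split <;> simp [*]
    rw [Finset.sum_congr rfl (fun u _ => this u), Finset.sum_ite_eq' univ (H.inv z)]
    simp
  have hr : ∑ u, H.N y z u * H.N x u H.e = H.N y z (H.inv x) * c H x := by
    have : ∀ u, H.N y z u * H.N x u H.e
        = if u = H.inv x then H.N y z u * c H x else 0 := by
      intro u
      rw [N_e H x u]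
      split <;> simp [*]
    rw [Finset.sum_congr rfl (fun u _ => this u), Finset.sum_ite_eq' univ (H.inv x)]
    simp
  rw [← hl, ← hr, h]

lemma key2 (H : Hypergroup A) (x y z : A) :
    H.N x y z * c H z = H.N y (H.inv z) (H.inv x) * c H x := by
  have := key1 H x y (H.inv z)
  rwa [H.inv_inv] at this

lemma keyJ (H : Hypergroup A) (x y z : A) :
    H.N x y z * c H z = H.N z (H.inv y) x * c H x := by
  rw [key2]
  have := H.inv_anti y (H.inv z) (H.inv x)
  rw [H.inv_inv, H.inv_inv] at this
  rw [this]

lemma keyK (H : Hypergroup A) (x y z : A) :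
    H.N x y z * c H z * c H (H.inv x) = H.N (H.inv x) z y * c H y * c H x := by
  have h1 : H.N x y z * c H z = H.N y (H.inv z) (H.inv x) * c H x := key2 H x y z
  have h2 : H.N (H.inv x) z y * c H y = H.N y (H.inv z) (H.inv x) * c H (H.inv x) :=
    keyJ H (H.inv x) z y
  rw [h1, h2]; ring

lemma pairing (N : A → A → A → ℝ) (x : A) (u w : A → ℝ) (mu lam : ℝ)
    (hu : ∀ a, 0 < u a) (hw : ∀ a, 0 < w a)
    (hleft : ∀ y, ∑ z, u z * N x y z = mu * u y)
    (hright : ∀ z, ∑ y, N x y z * w y = lam * w z) : lam = mu := by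
  have hne : (univ : Finset A).Nonempty := ⟨x, mem_univ x⟩
  have h1 : ∑ z, u z * (lam * w z) = ∑ y, (mu * u y) * w y := by
    calc ∑ z, u z * (lam * w z) = ∑ z, u z * ∑ y, N x y z * w y := by
          simp_rw [hright]
      _ = ∑ z, ∑ y, u z * (N x y z * w y) := by simp_rw [Finset.mul_sum]
      _ = ∑ y, ∑ z, u z * (N x y z * w y) := Finset.sum_comm
      _ = ∑ y, (∑ z, u z * N x y z) * w y := by
          simp_rw [Finset.sum_mul]; congr 1; ext y; congr 1; ext z; ring
      _ = ∑ y, (mu * u y) * w y := by simp_rw [hleft]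
  have h2 : lam * ∑ z, u z * w z = mu * ∑ z, u z * w z := by
    rw [Finset.mul_sum, Finset.mul_sum]
    calc ∑ z, lam * (u z * w z) = ∑ z, u z * (lam * w z) := by
          congr 1; ext z; ring
      _ = ∑ y, (mu * u y) * w y := h1
      _ = ∑ z, mu * (u z * w z) := by congr 1; ext z; ring
  have hpos : 0 < ∑ z, u z * w z :=
    Finset.sum_pos (fun z _ => mul_pos (hu z) (hw z)) hne
  exact mul_right_cancel₀ (ne_of_gt hpos) h2

/-- Any eigenvalue of left multiplication by `x` admitting a strictly positive
eigenvector equals `d x`. -/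
lemma eigen_eq (H : Hypergroup A) (d : A → ℝ)
    (hd : ∀ x, ∃ v : A → ℝ, (∀ a, 0 < v a) ∧
      ∀ z, (∑ y, H.N x y z * v y) = d x * v z)
    (x : A) {w : A → ℝ} {lam : ℝ}
    (hwpos : ∀ a, 0 < w a)
    (hw : ∀ z, ∑ y, H.N x y z * w y = lam * w z) : lam = d x := by
  obtain ⟨v, hv, hve⟩ := hd (H.inv x)
  set u : A → ℝ := fun z => c H z * v z with hu_def
  have hupos : ∀ a, 0 < u a := fun a => mul_pos (c_pos H a) (hv a)
  set mu : ℝ := d (H.inv x) * c H x / c H (H.inv x) with hmu_def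
  have hNz : ∀ z y, H.N x y z * c H z
      = H.N (H.inv x) z y * c H y * c H x / c H (H.inv x) := by
    intro z y
    rw [eq_div_iff (ne_of_gt (c_pos H (H.inv x)))]
    exact keyK H x y z
  have hleft : ∀ y, ∑ z, u z * H.N x y z = mu * u y := by
    intro y
    calc ∑ z, u z * H.N x y z = ∑ z, v z * (H.N x y z * c H z) := by
          apply Finset.sum_congr rfl; intro z _; simp only [hu_def]; ring
      _ = ∑ z, v z * (H.N (H.inv x) z y * c H y * c H x / c H (H.inv x)) := by
          simp_rw [hNz]
      _ = (c H y * c H x / c H (H.inv x)) * ∑ z, H.N (H.inv x) z y * v z := by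
          rw [Finset.mul_sum]; apply Finset.sum_congr rfl; intro z _; ring
      _ = (c H y * c H x / c H (H.inv x)) * (d (H.inv x) * v y) := by rw [hve y]
      _ = mu * u y := by simp only [hmu_def, hu_def]; ring
  have h1 : lam = mu := pairing H.N x u w mu lam hupos hwpos hleft hw
  obtain ⟨vx, hvx, hvxe⟩ := hd x
  have h2 : d x = mu := pairing H.N x u vx mu (d x) hupos hvx hleft hvxe
  rw [h1, h2]

/-- Perron–Frobenius for a strictly positive matrix: there is an eigenvalue
with a strictly positive eigenvector, and its eigenspace is one-dimensional. -/
lemma pf_exists [Nonempty A] (M : A → A → ℝ) (hM : ∀ a b, 0 < M a b) :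
    ∃ (R : A → ℝ) (lam : ℝ), (∀ a, 0 < R a) ∧ 0 < lam ∧
      (∀ a, ∑ b, M a b * R b = lam * R a) ∧
      (∀ u : A → ℝ, (∀ a, ∑ b, M a b * u b = lam * u a) →
        ∃ t : ℝ, ∀ a, u a = t * R a) := by
  classical
  set C : ℝ := ∑ a, ∑ b, M a b with hC
  set S : Set (ℝ × (A → ℝ)) :=
    {p | (∀ a, 0 ≤ p.2 a) ∧ (∑ a, p.2 a = 1) ∧ 0 ≤ p.1 ∧
      ∀ a, p.1 * p.2 a ≤ ∑ b, M a b * p.2 b} with hS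
  have hclosed : IsClosed S := by
    have h1 : IsClosed {p : ℝ × (A → ℝ) | ∀ a, 0 ≤ p.2 a} := by
      rw [Set.setOf_forall]
      exact isClosed_iInter fun a =>
        isClosed_le continuous_const ((continuous_apply a).comp continuous_snd)
    have h2 : IsClosed {p : ℝ × (A → ℝ) | ∑ a, p.2 a = 1} :=
      isClosed_eq (by fun_prop) continuous_const
    have h3 : IsClosed {p : ℝ × (A → ℝ) | 0 ≤ p.1} :=
      isClosed_le continuous_const continuous_fst
    have h4 : IsClosed {p : ℝ × (A → ℝ) | ∀ a, p.1 * p.2 a ≤ ∑ b, M a b * p.2 b} := by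
      rw [Set.setOf_forall]
      exact isClosed_iInter fun a => isClosed_le (by fun_prop) (by fun_prop)
    have : S = {p : ℝ × (A → ℝ) | ∀ a, 0 ≤ p.2 a} ∩ {p | ∑ a, p.2 a = 1}
        ∩ {p | 0 ≤ p.1} ∩ {p | ∀ a, p.1 * p.2 a ≤ ∑ b, M a b * p.2 b} := by
      ext p; simp only [hS, Set.mem_setOf_eq, Set.mem_inter_iff]; tauto
    rw [this]
    exact ((h1.inter h2).inter h3).inter h4
  have hsub : S ⊆ Set.Icc ((0 : ℝ), fun _ : A => (0:ℝ)) (C, fun _ : A => (1:ℝ)) := by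
    rintro ⟨lam, v⟩ ⟨hv0, hvs, hl0, hineq⟩
    have hvle1 : ∀ a, v a ≤ 1 := by
      intro a
      rw [← hvs]
      exact Finset.single_le_sum (fun b _ => hv0 b) (mem_univ a)
    constructor
    · exact ⟨hl0, fun a => hv0 a⟩
    · constructor
      · have h1 : lam = ∑ a, lam * v a := by rw [← Finset.mul_sum, hvs, mul_one]
        have h2 : ∑ a, lam * v a ≤ ∑ a, ∑ b, M a b * v b :=
          Finset.sum_le_sum fun a _ => hineq a
        have h3 : ∑ a, ∑ b, M a b * v b ≤ C := by
          apply Finset.sum_le_sum; intro a _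
          apply Finset.sum_le_sum; intro b _
          calc M a b * v b ≤ M a b * 1 :=
                mul_le_mul_of_nonneg_left (hvle1 b) (le_of_lt (hM a b))
            _ = M a b := mul_one _
        simp only []
        linarith
      · exact fun a => hvle1 a
  have hcompact : IsCompact S :=
    (isCompact_Icc).of_isClosed_subset hclosed hsub
  have hne : S.Nonempty := by
    refine ⟨⟨0, fun _ => (Fintype.card A : ℝ)⁻¹⟩, ?_, ?_, ?_, ?_⟩
    · intro a; exact inv_nonneg.mpr (Nat.cast_nonneg _)
    · rw [Finset.sum_const, nsmul_eq_mul, Finset.card_univ]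
      rw [mul_inv_cancel₀]
      exact_mod_cast Fintype.card_ne_zero
    · exact le_refl 0
    · intro a
      simp only [zero_mul]
      apply Finset.sum_nonneg; intro b _
      exact mul_nonneg (le_of_lt (hM a b)) (inv_nonneg.mpr (Nat.cast_nonneg _))
  obtain ⟨p, hpS, hpmax⟩ := hcompact.exists_isMaxOn hne continuous_fst.continuousOn
  obtain ⟨hv0, hvs, hl0, hineq⟩ := hpS
  set lam := p.1 with hlam_def
  set v := p.2 with hv_def
  have hvb : ∃ b, 0 < v b := by
    by_contra h
    push_neg at h
    have : ∑ a, v a = 0 :=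
      Finset.sum_eq_zero fun a _ => le_antisymm (h a) (hv0 a)
    rw [hvs] at this; norm_num at this
  obtain ⟨b₀, hb₀⟩ := hvb
  set w : A → ℝ := fun a => ∑ b, M a b * v b with hw_def
  have hwpos : ∀ a, 0 < w a := by
    intro a
    apply Finset.sum_pos' (fun b _ => mul_nonneg (le_of_lt (hM a b)) (hv0 b))
    exact ⟨b₀, mem_univ b₀, mul_pos (hM a b₀) hb₀⟩
  have heq : ∀ a, ∑ b, M a b * v b = lam * v a := by
    by_contra h
    push_neg at h
    obtain ⟨a₀, ha₀⟩ := h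
    have hstrict : lam * v a₀ < w a₀ := lt_of_le_of_ne (hineq a₀) (Ne.symm ha₀)
    have hq : ∀ a, 0 < (∑ b, M a b * w b) - lam * w a := by
      intro a
      have hexp : lam * w a = ∑ b, M a b * (lam * v b) := by
        rw [hw_def]; simp only []
        rw [Finset.mul_sum]
        apply Finset.sum_congr rfl; intro b _; ring
      have : (∑ b, M a b * w b) - lam * w a = ∑ b, M a b * (w b - lam * v b) := by
        rw [hexp, ← Finset.sum_sub_distrib]
        apply Finset.sum_congr rfl; intro b _; ring
      rw [this]
      apply Finset.sum_pos' (fun b _ => mul_nonneg (le_of_lt (hM a b)) (by linarith [hineq b]))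
      exact ⟨a₀, mem_univ a₀, mul_pos (hM a a₀) (by linarith)⟩
    obtain ⟨a₁, _, ha₁⟩ := Finset.exists_min_image univ
      (fun a => ((∑ b, M a b * w b) - lam * w a) / w a) ⟨Classical.arbitrary A, mem_univ _⟩
    set eps : ℝ := ((∑ b, M a₁ b * w b) - lam * w a₁) / w a₁ with heps_def
    have heps : 0 < eps := div_pos (hq a₁) (hwpos a₁)
    have hboost : ∀ a, (lam + eps) * w a ≤ ∑ b, M a b * w b := by
      intro a
      have h1 : eps ≤ ((∑ b, M a b * w b) - lam * w a) / w a := ha₁ a (mem_univ a)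
      have h2 : eps * w a ≤ (∑ b, M a b * w b) - lam * w a :=
        (le_div_iff₀ (hwpos a)).mp h1
      linarith
    set sig : ℝ := ∑ a, w a with hsig_def
    have hsig : 0 < sig := Finset.sum_pos (fun a _ => hwpos a) ⟨Classical.arbitrary A, mem_univ _⟩
    have hmem : ((lam + eps, fun a => w a / sig) : ℝ × (A → ℝ)) ∈ S := by
      refine ⟨?_, ?_, ?_, ?_⟩
      · intro a; exact le_of_lt (div_pos (hwpos a) hsig)
      · show (∑ a, w a / sig) = 1
        rw [← Finset.sum_div, ← hsig_def, div_self (ne_of_gt hsig)]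
      · linarith
      · intro a
        simp only []
        have h5 : ∑ b, M a b * (w b / sig) = (∑ b, M a b * w b) / sig := by
          rw [Finset.sum_div]
          apply Finset.sum_congr rfl; intro b _; ring
        rw [h5, ← mul_div_assoc]
        gcongr
        exact hboost a
    have := hpmax hmem
    simp only [← hlam_def] at this
    have : lam + eps ≤ lam := this
    linarith
  have hvpos : ∀ a, 0 < v a := by
    intro a
    rcases lt_or_eq_of_le (hv0 a) with h | h
    · exact h
    · exfalso
      have := heq a
      rw [← h, mul_zero] at this
      exact absurd this (ne_of_gt (hwpos a))
  have hlampos : 0 < lam := by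
    have h1 := heq b₀
    have h2 := hwpos b₀
    rw [hw_def] at h2
    simp only [] at h2
    rw [h1] at h2
    by_contra hle
    push_neg at hle
    have : lam * v b₀ ≤ 0 := mul_nonpos_of_nonpos_of_nonneg hle (hv0 b₀)
    linarith
  refine ⟨v, lam, hvpos, hlampos, heq, ?_⟩
  intro u hu
  obtain ⟨a₀, _, ha₀⟩ := Finset.exists_min_image univ
    (fun a => u a / v a) ⟨Classical.arbitrary A, mem_univ _⟩
  set t : ℝ := u a₀ / v a₀ with ht_def
  set g : A → ℝ := fun a => u a - t * v a with hg_def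
  have hg0 : ∀ a, 0 ≤ g a := by
    intro a
    have h1 : t ≤ u a / v a := ha₀ a (mem_univ a)
    have h2 : t * v a ≤ u a := (le_div_iff₀ (hvpos a)).mp h1
    simp only [hg_def]
    linarith
  have hga₀ : g a₀ = 0 := by
    simp only [hg_def, ht_def]
    rw [div_mul_cancel₀ _ (ne_of_gt (hvpos a₀))]
    ring
  have hgeig : ∀ a, ∑ b, M a b * g b = lam * g a := by
    intro a
    simp only [hg_def]
    have : ∀ b, M a b * (u b - t * v b) = M a b * u b - t * (M a b * v b) := by
      intro b; ring
    simp_rw [this]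
    rw [Finset.sum_sub_distrib, ← Finset.mul_sum, hu a, heq a]
    ring
  have hgz : ∀ a, g a = 0 := by
    by_contra h
    push_neg at h
    obtain ⟨a₁, ha₁⟩ := h
    have hga₁ : 0 < g a₁ := lt_of_le_of_ne (hg0 a₁) (Ne.symm ha₁)
    have h1 : 0 < ∑ b, M a₀ b * g b := by
      apply Finset.sum_pos' (fun b _ => mul_nonneg (le_of_lt (hM a₀ b)) (hg0 b))
      exact ⟨a₁, mem_univ a₁, mul_pos (hM a₀ a₁) hga₁⟩
    rw [hgeig a₀, hga₀, mul_zero] at h1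
    exact lt_irrefl 0 h1
  exact ⟨t, fun a => by have := hgz a; simp only [hg_def] at this; linarith⟩

lemma sum3_comm (F : A → A → A → ℝ) :
    ∑ b, ∑ t, ∑ w, F b t w = ∑ w, ∑ t, ∑ b, F b t w := by
  calc ∑ b, ∑ t, ∑ w, F b t w
      = ∑ b, ∑ w, ∑ t, F b t w := Finset.sum_congr rfl (fun b _ => Finset.sum_comm)
    _ = ∑ w, ∑ b, ∑ t, F b t w := Finset.sum_comm
    _ = ∑ w, ∑ t, ∑ b, F b t w := Finset.sum_congr rfl (fun w _ => Finset.sum_comm)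

end HGaux

open Finset in
/-- The quantum dimension is a ring homomorphism: if each `d x` is the
Perron–Frobenius eigenvalue of left multiplication by `x` (characterized by
having an eigenvector with all entries positive), then d_x d_y = Σ_z N_{xy}^z d_z. -/
theorem stmt_13 {A : Type} [Fintype A] [DecidableEq A] (H : Hypergroup A)
    (d : A → ℝ)
    (hd : ∀ x, ∃ v : A → ℝ, (∀ a, 0 < v a) ∧
      ∀ z, (∑ y, H.N x y z * v y) = d x * v z) :
    ∀ x y, d x * d y = ∑ z, H.N x y z * d z := by
  classical
  intro x y
  haveI : Nonempty A := ⟨x⟩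
  -- the matrix of right multiplication by the sum of all basis elements
  -- is strictly positive
  have hpos_exists : ∀ b a : A, ∃ u, 0 < H.N b u a := by
    intro b a
    have hassoc := H.assoc b (H.inv b) a a
    have hLHS : 0 < ∑ u, H.N b (H.inv b) u * H.N u a a := by
      apply Finset.sum_pos' (fun u _ => mul_nonneg (H.N_nonneg _ _ _) (H.N_nonneg _ _ _))
      refine ⟨H.e, mem_univ _, ?_⟩
      have h1 : H.N H.e a a = 1 := by rw [H.one_mul]; simp
      rw [h1, mul_one]
      exact HGaux.c_pos H b
    rw [hassoc] at hLHS
    by_contra h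
    push_neg at h
    have hzero : ∑ u, H.N (H.inv b) a u * H.N b u a = 0 := by
      apply Finset.sum_eq_zero; intro u _
      have h2 : H.N b u a = 0 := le_antisymm (h u) (H.N_nonneg _ _ _)
      rw [h2, mul_zero]
    rw [hzero] at hLHS; exact lt_irrefl 0 hLHS
  have hMs : ∀ a b : A, 0 < ∑ t, H.N b t a := by
    intro a b
    obtain ⟨u, hu⟩ := hpos_exists b a
    exact Finset.sum_pos' (fun t _ => H.N_nonneg _ _ _) ⟨u, mem_univ u, hu⟩
  obtain ⟨R, lam, hR, hlam, heig, huniq⟩ :=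
    HGaux.pf_exists (fun a b => ∑ t, H.N b t a) hMs
  -- each left multiplication operator fixes the Perron-Frobenius eigenline
  have hstep : ∀ z a, ∑ w, H.N z w a * R w = d z * R a := by
    intro z
    have hcomm : ∀ a, ∑ b, (∑ t, H.N b t a) * (∑ w, H.N z w b * R w)
        = lam * (∑ w, H.N z w a * R w) := by
      intro a
      have hswap : ∑ b, (∑ t, H.N b t a) * (∑ w, H.N z w b * R w)
          = ∑ b, H.N z b a * (∑ w, (∑ t, H.N w t b) * R w) := by
        calc ∑ b, (∑ t, H.N b t a) * (∑ w, H.N z w b * R w)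
            = ∑ b, ∑ t, ∑ w, H.N b t a * (H.N z w b * R w) := by
              simp_rw [Finset.sum_mul, Finset.mul_sum]
          _ = ∑ w, ∑ t, ∑ b, H.N b t a * (H.N z w b * R w) := HGaux.sum3_comm _
          _ = ∑ w, ∑ t, (∑ b, H.N z w b * H.N b t a) * R w := by
              apply Finset.sum_congr rfl; intro w _
              apply Finset.sum_congr rfl; intro t _
              rw [Finset.sum_mul]
              apply Finset.sum_congr rfl; intro b _; ring
          _ = ∑ w, ∑ t, (∑ b, H.N w t b * H.N z b a) * R w := by
              apply Finset.sum_congr rfl; intro w _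
              apply Finset.sum_congr rfl; intro t _
              rw [H.assoc z w t a]
          _ = ∑ w, ∑ t, ∑ b, H.N z b a * (H.N w t b * R w) := by
              apply Finset.sum_congr rfl; intro w _
              apply Finset.sum_congr rfl; intro t _
              rw [Finset.sum_mul]
              apply Finset.sum_congr rfl; intro b _; ring
          _ = ∑ b, ∑ t, ∑ w, H.N z b a * (H.N w t b * R w) := (HGaux.sum3_comm _).symm
          _ = ∑ b, ∑ w, ∑ t, H.N z b a * (H.N w t b * R w) :=
              Finset.sum_congr rfl (fun b _ => Finset.sum_comm)
          _ = ∑ b, H.N z b a * (∑ w, (∑ t, H.N w t b) * R w) := by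
              apply Finset.sum_congr rfl; intro b _
              conv_rhs => rw [Finset.mul_sum]
              apply Finset.sum_congr rfl; intro w _
              rw [Finset.sum_mul, Finset.mul_sum]
      rw [hswap]
      calc ∑ b, H.N z b a * (∑ w, (∑ t, H.N w t b) * R w)
          = ∑ b, H.N z b a * (lam * R b) := by
            apply Finset.sum_congr rfl; intro b _
            rw [heig b]
        _ = lam * ∑ w, H.N z w a * R w := by
            rw [Finset.mul_sum]
            apply Finset.sum_congr rfl; intro b _; ring
    obtain ⟨t, ht⟩ := huniq (fun a => ∑ w, H.N z w a * R w) hcomm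
    have htd : t = d z := HGaux.eigen_eq H d hd z hR (fun a => ht a)
    intro a
    rw [ht a, htd]
  -- conclude: compute ℓ_x (ℓ_y R) in two ways
  have hLL : ∀ a, ∑ u, H.N x u a * (∑ w, H.N y w u * R w) = (d x * d y) * R a := by
    intro a
    calc ∑ u, H.N x u a * (∑ w, H.N y w u * R w)
        = ∑ u, H.N x u a * (d y * R u) := by
          apply Finset.sum_congr rfl; intro u _
          rw [hstep y u]
      _ = d y * ∑ u, H.N x u a * R u := by
          rw [Finset.mul_sum]
          apply Finset.sum_congr rfl; intro u _; ring
      _ = d y * (d x * R a) := by rw [hstep x a]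
      _ = (d x * d y) * R a := by ring
  have hRR : ∀ a, ∑ u, H.N x u a * (∑ w, H.N y w u * R w)
      = (∑ u, H.N x y u * d u) * R a := by
    intro a
    calc ∑ u, H.N x u a * (∑ w, H.N y w u * R w)
        = ∑ u, ∑ w, H.N x u a * (H.N y w u * R w) := by simp_rw [Finset.mul_sum]
      _ = ∑ w, ∑ u, H.N x u a * (H.N y w u * R w) := Finset.sum_comm
      _ = ∑ w, (∑ u, H.N y w u * H.N x u a) * R w := by
          apply Finset.sum_congr rfl; intro w _
          rw [Finset.sum_mul]
          apply Finset.sum_congr rfl; intro u _; ring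
      _ = ∑ w, (∑ u, H.N x y u * H.N u w a) * R w := by
          apply Finset.sum_congr rfl; intro w _
          rw [H.assoc x y w a]
      _ = ∑ w, ∑ u, H.N x y u * (H.N u w a * R w) := by
          apply Finset.sum_congr rfl; intro w _
          rw [Finset.sum_mul]
          apply Finset.sum_congr rfl; intro u _; ring
      _ = ∑ u, ∑ w, H.N x y u * (H.N u w a * R w) := Finset.sum_comm
      _ = ∑ u, H.N x y u * (∑ w, H.N u w a * R w) := by
          simp_rw [Finset.mul_sum]
      _ = ∑ u, H.N x y u * (d u * R a) := by
          apply Finset.sum_congr rfl; intro u _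
          rw [hstep u a]
      _ = (∑ u, H.N x y u * d u) * R a := by
          rw [Finset.sum_mul]
          apply Finset.sum_congr rfl; intro u _; ring
  have hfin : (d x * d y) * R x = (∑ u, H.N x y u * d u) * R x := by
    rw [← hLL x, hRR x]
  exact mul_right_cancel₀ (ne_of_gt (hR x)) hfin
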